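/- Let |𝒳| be the maximum alphabet cardinality of X_1,…,X_n. For any subset γ ⊆ {1,…,n} with |γ| = m, the O-information satisfies C(X^γ) − (n−2) log|𝒳| ≤ Ω(X^n) ≤ C(X^γ) + (n−m−1) log|𝒳|. -/

import Mathlib

open Finset

noncomputable section

variable {Ω : Type*} [Fintype Ω]

/-- Probability of the event `A ⊆ Ω` under the probability mass function `p`. -/
def probOf (p : Ω → ℝ) (A : Finset Ω) : ℝ := ∑ ω ∈ A, p ω

/-- Shannon entropy (in bits, i.e. logarithm base 2) of the discrete random
variable `X` defined on the finite probability space with mass function `p`. -/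
def shEnt {S : Type*} [Fintype S] [DecidableEq S] (p : Ω → ℝ) (X : Ω → S) : ℝ :=
  -∑ s : S, probOf p (univ.filter fun ω => X ω = s) *
      Real.logb 2 (probOf p (univ.filter fun ω => X ω = s))

/-- Mutual information `I(X;Y)`. -/
def mutInfo {S T : Type*} [Fintype S] [DecidableEq S] [Fintype T] [DecidableEq T]
    (p : Ω → ℝ) (X : Ω → S) (Y : Ω → T) : ℝ :=
  shEnt p X + shEnt p Y - shEnt p (fun ω => (X ω, Y ω))

/-- Conditional mutual information `I(X;Y∣Z)`. -/
def condMutInfo {S T U : Type*} [Fintype S] [DecidableEq S] [Fintype T] [DecidableEq T]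
    [Fintype U] [DecidableEq U] (p : Ω → ℝ) (X : Ω → S) (Y : Ω → T) (Z : Ω → U) : ℝ :=
  shEnt p (fun ω => (X ω, Z ω)) + shEnt p (fun ω => (Y ω, Z ω))
    - shEnt p (fun ω => (X ω, Y ω, Z ω)) - shEnt p Z

variable {n : ℕ} {S : Fin n → Type*} [∀ i, Fintype (S i)] [∀ i, DecidableEq (S i)]

/-- The sub-vector `X^γ` of the tuple of random variables `X`. -/
def restrict (X : ∀ i, Ω → S i) (γ : Finset (Fin n)) : Ω → ∀ i : γ, S i.1 :=
  fun ω i => X i.1 ω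

/-- Joint Shannon entropy `H(X^γ)` of the sub-vector indexed by `γ`. -/
def subEnt (p : Ω → ℝ) (X : ∀ i, Ω → S i) (γ : Finset (Fin n)) : ℝ :=
  shEnt p (restrict X γ)

/-- Total correlation `C(X^γ)`: sum of marginal entropies minus joint entropy. -/
def totCorr (p : Ω → ℝ) (X : ∀ i, Ω → S i) (γ : Finset (Fin n)) : ℝ :=
  (∑ i ∈ γ, shEnt p (X i)) - subEnt p X γ

/-- Binding entropy `B(X^γ)`: joint entropy minus the sum of the residual
entropies `R_j = H(X_j ∣ X^γ_{-j})` (each conditional entropy being a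
difference of joint entropies). -/
def bindEnt (p : Ω → ℝ) (X : ∀ i, Ω → S i) (γ : Finset (Fin n)) : ℝ :=
  subEnt p X γ - ∑ i ∈ γ, (subEnt p X γ - subEnt p X (γ.erase i))

/-- The O-information `Ω(X^γ) = C(X^γ) - B(X^γ)`. -/
def oInfo (p : Ω → ℝ) (X : ∀ i, Ω → S i) (γ : Finset (Fin n)) : ℝ :=
  totCorr p X γ - bindEnt p X γ

namespace OProof

/-- distribution of `X` -/
def pm (p : Ω → ℝ) {S : Type*} [Fintype S] [DecidableEq S] (X : Ω → S) (s : S) : ℝ :=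
  probOf p (univ.filter fun ω => X ω = s)

variable {S T U : Type*} [Fintype S] [DecidableEq S] [Fintype T] [DecidableEq T]
  [Fintype U] [DecidableEq U] {p : Ω → ℝ}

lemma shEnt_eq (X : Ω → S) : shEnt p X = -∑ s : S, pm p X s * Real.logb 2 (pm p X s) := rfl

lemma pm_nonneg (hp : ∀ ω, 0 ≤ p ω) (X : Ω → S) (s : S) : 0 ≤ pm p X s :=
  Finset.sum_nonneg fun ω _ => hp ω

lemma sum_pm (hp1 : ∑ ω, p ω = 1) (X : Ω → S) : ∑ s : S, pm p X s = 1 := by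
  unfold pm probOf
  rw [Finset.sum_fiberwise univ X p]
  exact hp1

lemma pm_le_one (hp : ∀ ω, 0 ≤ p ω) (hp1 : ∑ ω, p ω = 1) (X : Ω → S) (s : S) :
    pm p X s ≤ 1 := by
  have := sum_pm hp1 X
  calc pm p X s ≤ ∑ t : S, pm p X t :=
        Finset.single_le_sum (fun t _ => pm_nonneg hp X t) (mem_univ s)
    _ = 1 := this

/-- marginalization under post-composition -/
lemma pm_comp (X : Ω → S) (e : S → T) (t : T) :
    pm p (fun ω => e (X ω)) t = ∑ s ∈ univ.filter (fun s => e s = t), pm p X s := by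
  unfold pm probOf
  simp only [Finset.sum_filter]
  have h : ∀ x : S, (if e x = t then ∑ a : Ω, if X a = x then p a else 0 else 0)
      = ∑ a : Ω, if X a = x then (if e x = t then p a else 0) else 0 := by
    intro x; split <;> simp
  simp only [h]
  rw [Finset.sum_comm]
  refine Finset.sum_congr rfl fun a _ => ?_
  rw [Finset.sum_ite_eq univ (X a) (fun x => if e x = t then p a else 0)]
  simp


end OProof

namespace OProof2
open OProof

variable {S T U : Type*} [Fintype S] [DecidableEq S] [Fintype T] [DecidableEq T]
  [Fintype U] [DecidableEq U] {p : Ω → ℝ}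

/-- Gibbs' inequality. -/
lemma gibbs {ι : Type*} [Fintype ι] (a b : ι → ℝ) (ha : ∀ i, 0 ≤ a i) (hb : ∀ i, 0 ≤ b i)
    (hab : ∀ i, b i = 0 → a i = 0) (hsum : ∑ i, b i ≤ ∑ i, a i) :
    ∑ i, a i * Real.logb 2 (b i) ≤ ∑ i, a i * Real.logb 2 (a i) := by
  have key : ∑ i, a i * Real.log (b i) ≤ ∑ i, a i * Real.log (a i) := by
    have h1 : ∀ i, a i * Real.log (b i) - a i * Real.log (a i) ≤ b i - a i := by
      intro i
      rcases eq_or_lt_of_le (ha i) with h0 | h0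
      · simp [← h0, hb i]
      · have hbpos : 0 < b i :=
          lt_of_le_of_ne (hb i) (fun h => by
            have := hab i h.symm; exact absurd this h0.ne')
        have hlog : Real.log (b i) - Real.log (a i) = Real.log (b i / a i) :=
          (Real.log_div hbpos.ne' h0.ne').symm
        have hle : Real.log (b i / a i) ≤ b i / a i - 1 :=
          Real.log_le_sub_one_of_pos (div_pos hbpos h0)
        calc a i * Real.log (b i) - a i * Real.log (a i)
            = a i * (Real.log (b i / a i)) := by rw [← hlog]; ring
          _ ≤ a i * (b i / a i - 1) := by
              exact mul_le_mul_of_nonneg_left hle (le_of_lt h0)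
          _ = b i - a i := by field_simp
    have h2 : ∑ i, (a i * Real.log (b i) - a i * Real.log (a i)) ≤ ∑ i, (b i - a i) :=
      Finset.sum_le_sum fun i _ => h1 i
    rw [Finset.sum_sub_distrib, Finset.sum_sub_distrib] at h2
    linarith
  simp only [Real.logb, ← mul_div_assoc, ← Finset.sum_div]
  have hl2 : (0:ℝ) < Real.log 2 := Real.log_pos one_lt_two
  exact div_le_div_of_nonneg_right key hl2.le |>.trans_eq rfl

lemma shEnt_nonneg (hp : ∀ ω, 0 ≤ p ω) (hp1 : ∑ ω, p ω = 1) (X : Ω → S) :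
    0 ≤ shEnt p X := by
  rw [shEnt_eq, neg_nonneg]
  refine Finset.sum_nonpos fun s _ => ?_
  exact mul_nonpos_of_nonneg_of_nonpos (pm_nonneg hp X s)
    (Real.logb_nonpos one_lt_two (pm_nonneg hp X s) (pm_le_one hp hp1 X s))

lemma shEnt_le_logb_card (hp : ∀ ω, 0 ≤ p ω) (hp1 : ∑ ω, p ω = 1) [Nonempty S] (X : Ω → S) :
    shEnt p X ≤ Real.logb 2 (Fintype.card S) := by
  have hcard : (0:ℝ) < (Fintype.card S : ℝ) := by
    exact_mod_cast Fintype.card_pos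
  have := gibbs (pm p X) (fun _ => (Fintype.card S : ℝ)⁻¹) (pm_nonneg hp X)
    (fun _ => by positivity)
    (fun i h => absurd h (by positivity))
    (le_of_eq (by rw [Finset.sum_const, sum_pm hp1, nsmul_eq_mul, Finset.card_univ,
        mul_inv_cancel₀ hcard.ne']))
  rw [shEnt_eq]
  have hL : ∑ s : S, pm p X s * Real.logb 2 ((Fintype.card S : ℝ)⁻¹)
      = -Real.logb 2 (Fintype.card S) := by
    rw [← Finset.sum_mul, sum_pm hp1, one_mul, Real.logb_inv]
  linarith [this, hL.symm.trans_le this]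

lemma shEnt_subsingleton (hp1 : ∑ ω, p ω = 1) [Subsingleton T] (f : Ω → T) :
    shEnt p f = 0 := by
  rw [shEnt_eq, neg_eq_zero]
  refine Finset.sum_eq_zero fun s _ => ?_
  have h1 : pm p f s = 1 := by
    unfold pm probOf
    rw [Finset.filter_true_of_mem fun ω _ => Subsingleton.elim _ _]
    exact hp1
  simp [h1]

lemma shEnt_comp_le (hp : ∀ ω, 0 ≤ p ω) (X : Ω → S) (e : S → T) :
    shEnt p (fun ω => e (X ω)) ≤ shEnt p X := by
  rw [shEnt_eq, shEnt_eq, neg_le_neg_iff]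
  have hre : ∀ s, pm p X s * Real.logb 2 (pm p X s)
      ≤ pm p X s * Real.logb 2 (pm p (fun ω => e (X ω)) (e s)) := by
    intro s
    rcases eq_or_lt_of_le (pm_nonneg hp X s) with h0 | h0
    · simp [← h0]
    · refine mul_le_mul_of_nonneg_left ?_ h0.le
      refine Real.logb_le_logb_of_le one_lt_two h0 ?_
      rw [pm_comp X e]
      exact Finset.single_le_sum (fun t _ => pm_nonneg hp X t)
        (Finset.mem_filter.mpr ⟨Finset.mem_univ s, rfl⟩)
  calc ∑ s : S, pm p X s * Real.logb 2 (pm p X s)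
      ≤ ∑ s : S, pm p X s * Real.logb 2 (pm p (fun ω => e (X ω)) (e s)) :=
        Finset.sum_le_sum fun s _ => hre s
    _ = ∑ t : T, ∑ s ∈ univ.filter (fun s => e s = t),
          pm p X s * Real.logb 2 (pm p (fun ω => e (X ω)) t) := by
        rw [← Finset.sum_fiberwise univ e
          (fun s => pm p X s * Real.logb 2 (pm p (fun ω => e (X ω)) (e s)))]
        refine Finset.sum_congr rfl fun t _ => Finset.sum_congr rfl fun s hs => ?_
        rw [(Finset.mem_filter.mp hs).2]
    _ = ∑ t : T, pm p (fun ω => e (X ω)) t * Real.logb 2 (pm p (fun ω => e (X ω)) t) := by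
        refine Finset.sum_congr rfl fun t _ => ?_
        rw [← Finset.sum_mul, ← pm_comp]

end OProof2

namespace OProof3
open OProof OProof2

variable {S T U : Type*} [Fintype S] [DecidableEq S] [Fintype T] [DecidableEq T]
  [Fintype U] [DecidableEq U] {p : Ω → ℝ}

lemma pm_comp_inj (X : Ω → S) (e : S → T) (he : Function.Injective e) (s : S) :
    pm p (fun ω => e (X ω)) (e s) = pm p X s := by
  rw [pm_comp X e]
  have hf : univ.filter (fun s' => e s' = e s) = {s} := by
    ext s'; simp [he.eq_iff]
  rw [hf, Finset.sum_singleton]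

lemma shEnt_comp_inj (X : Ω → S) (e : S → T) (he : Function.Injective e) :
    shEnt p (fun ω => e (X ω)) = shEnt p X := by
  rw [shEnt_eq, shEnt_eq, neg_inj]
  rw [← Finset.sum_subset (Finset.subset_univ (univ.image e))]
  · rw [Finset.sum_image (fun x _ y _ h => he h)]
    refine Finset.sum_congr rfl fun s _ => ?_
    rw [pm_comp_inj X e he]
  · intro t _ ht
    have h0 : pm p (fun ω => e (X ω)) t = 0 := by
      rw [pm_comp X e]
      have : univ.filter (fun s => e s = t) = ∅ := by
        rw [Finset.filter_eq_empty_iff]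
        intro s _ h
        exact ht (Finset.mem_image.mpr ⟨s, Finset.mem_univ s, h⟩)
      simp [this]
    simp [h0]

lemma pm_marg_fst (X : Ω → S) (Z : Ω → U) (u : U) :
    pm p Z u = ∑ s, pm p (fun ω => (X ω, Z ω)) (s, u) := by
  unfold pm probOf
  simp only [Finset.sum_filter]
  rw [Finset.sum_comm]
  refine Finset.sum_congr rfl fun ω _ => ?_
  by_cases hZ : Z ω = u <;> simp [Prod.ext_iff, hZ, Finset.sum_ite_eq]

lemma pm_marg_mid (X : Ω → S) (Y : Ω → T) (Z : Ω → U) (s : S) (u : U) :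
    pm p (fun ω => (X ω, Z ω)) (s, u) = ∑ t, pm p (fun ω => (X ω, Y ω, Z ω)) (s, t, u) := by
  unfold pm probOf
  simp only [Finset.sum_filter]
  rw [Finset.sum_comm]
  refine Finset.sum_congr rfl fun ω _ => ?_
  by_cases hX : X ω = s <;> by_cases hZ : Z ω = u <;>
    simp [Prod.ext_iff, hX, hZ, Finset.sum_ite_eq]

lemma pm_marg_left (X : Ω → S) (Y : Ω → T) (Z : Ω → U) (t : T) (u : U) :
    pm p (fun ω => (Y ω, Z ω)) (t, u) = ∑ s, pm p (fun ω => (X ω, Y ω, Z ω)) (s, t, u) := by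
  unfold pm probOf
  simp only [Finset.sum_filter]
  rw [Finset.sum_comm]
  refine Finset.sum_congr rfl fun ω _ => ?_
  by_cases hY : Y ω = t <;> by_cases hZ : Z ω = u <;>
    simp [Prod.ext_iff, hY, hZ, Finset.sum_ite_eq]

lemma sum_triple (f : S × T × U → ℝ) : ∑ x : S × T × U, f x = ∑ u, ∑ s, ∑ t, f (s, t, u) := by
  rw [Fintype.sum_prod_type]
  simp_rw [Fintype.sum_prod_type]
  have h1 : ∀ s : S, (∑ t, ∑ u, f (s, t, u)) = ∑ u, ∑ t, f (s, t, u) := fun s =>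
    Finset.sum_comm
  simp_rw [h1]
  exact Finset.sum_comm

end OProof3

namespace OProof4
open OProof OProof2 OProof3

variable {S T U : Type*} [Fintype S] [DecidableEq S] [Fintype T] [DecidableEq T]
  [Fintype U] [DecidableEq U] {p : Ω → ℝ}

lemma submod (hp : ∀ ω, 0 ≤ p ω) (hp1 : ∑ ω, p ω = 1)
    (X : Ω → S) (Y : Ω → T) (Z : Ω → U) :
    shEnt p (fun ω => (X ω, Y ω, Z ω)) + shEnt p Z
      ≤ shEnt p (fun ω => (X ω, Z ω)) + shEnt p (fun ω => (Y ω, Z ω)) := by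
  classical
  set a : S × T × U → ℝ := pm p (fun ω => (X ω, Y ω, Z ω)) with ha'
  set q13 : S × U → ℝ := pm p (fun ω => (X ω, Z ω)) with h13'
  set q23 : T × U → ℝ := pm p (fun ω => (Y ω, Z ω)) with h23'
  set q3 : U → ℝ := pm p Z with h3'
  have ha0 : ∀ x, 0 ≤ a x := pm_nonneg hp _
  have h130 : ∀ y, 0 ≤ q13 y := pm_nonneg hp _
  have h230 : ∀ y, 0 ≤ q23 y := pm_nonneg hp _
  have h30 : ∀ u, 0 ≤ q3 u := pm_nonneg hp _
  have hm13 : ∀ s u, q13 (s, u) = ∑ t, a (s, t, u) := fun s u => pm_marg_mid X Y Z s u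
  have hm23 : ∀ t u, q23 (t, u) = ∑ s, a (s, t, u) := fun t u => pm_marg_left X Y Z t u
  have hm3 : ∀ u, q3 u = ∑ s, q13 (s, u) := fun u => pm_marg_fst X Z u
  have hm3' : ∀ u, q3 u = ∑ t, q23 (t, u) := fun u => pm_marg_fst Y Z u
  have hd13 : ∀ s t u, a (s, t, u) ≤ q13 (s, u) := fun s t u => by
    rw [hm13]
    exact Finset.single_le_sum (f := fun t' => a (s, t', u)) (fun t' _ => ha0 _) (Finset.mem_univ t)
  have hd23 : ∀ s t u, a (s, t, u) ≤ q23 (t, u) := fun s t u => by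
    rw [hm23]
    exact Finset.single_le_sum (f := fun s' => a (s', t, u)) (fun s' _ => ha0 _) (Finset.mem_univ s)
  have hd3 : ∀ s u, q13 (s, u) ≤ q3 u := fun s u => by
    rw [hm3]
    exact Finset.single_le_sum (f := fun s' => q13 (s', u)) (fun s' _ => h130 _) (Finset.mem_univ s)
  set b : S × T × U → ℝ := fun x => q13 (x.1, x.2.2) * q23 (x.2.1, x.2.2) / q3 x.2.2 with hb'
  have hb0 : ∀ x, 0 ≤ b x := fun x =>
    div_nonneg (mul_nonneg (h130 _) (h230 _)) (h30 _)
  have hab : ∀ x, b x = 0 → a x = 0 := by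
    rintro ⟨s, t, u⟩ hbx
    by_contra hax
    have hapos : 0 < a (s, t, u) := lt_of_le_of_ne (ha0 _) (Ne.symm hax)
    have hp13 : 0 < q13 (s, u) := lt_of_lt_of_le hapos (hd13 s t u)
    have hp23 : 0 < q23 (t, u) := lt_of_lt_of_le hapos (hd23 s t u)
    have hp3 : 0 < q3 u := lt_of_lt_of_le hp13 (hd3 s u)
    have : 0 < b (s, t, u) := div_pos (mul_pos hp13 hp23) hp3
    rw [hbx] at this
    exact lt_irrefl 0 this
  have hsumb : ∑ x : S × T × U, b x ≤ ∑ x : S × T × U, a x := by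
    rw [sum_pm hp1, sum_triple]
    have hstep : ∀ u, (∑ s, ∑ t, b (s, t, u)) ≤ q3 u := by
      intro u
      have he : (∑ s, ∑ t, b (s, t, u)) = (∑ s, q13 (s, u)) * ((∑ t, q23 (t, u)) / q3 u) := by
        simp only [hb', mul_div_assoc, ← Finset.mul_sum, ← Finset.sum_mul, ← Finset.sum_div]
      rw [he, ← hm3, ← hm3']
      by_cases h0 : q3 u = 0
      · rw [h0]; simp
      · rw [div_self h0, mul_one]
    calc (∑ u, ∑ s, ∑ t, b (s, t, u)) ≤ ∑ u, q3 u :=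
          Finset.sum_le_sum fun u _ => hstep u
      _ = 1 := sum_pm hp1 Z
  have hG := gibbs a b ha0 hb0 hab hsumb
  have hsplit : ∀ x : S × T × U, a x * Real.logb 2 (b x)
      = a x * Real.logb 2 (q13 (x.1, x.2.2)) + a x * Real.logb 2 (q23 (x.2.1, x.2.2))
        - a x * Real.logb 2 (q3 x.2.2) := by
    rintro ⟨s, t, u⟩
    by_cases hax : a (s, t, u) = 0
    · simp [hax]
    · have hapos : 0 < a (s, t, u) := lt_of_le_of_ne (ha0 _) (Ne.symm hax)
      have hp13 : 0 < q13 (s, u) := lt_of_lt_of_le hapos (hd13 s t u)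
      have hp23 : 0 < q23 (t, u) := lt_of_lt_of_le hapos (hd23 s t u)
      have hp3 : 0 < q3 u := lt_of_lt_of_le hp13 (hd3 s u)
      show a (s,t,u) * Real.logb 2 (q13 (s,u) * q23 (t,u) / q3 u) = _
      rw [Real.logb_div (mul_ne_zero hp13.ne' hp23.ne') hp3.ne',
        Real.logb_mul hp13.ne' hp23.ne']
      ring
  have hsum_split : ∑ x : S × T × U, a x * Real.logb 2 (b x)
      = (∑ x : S × T × U, a x * Real.logb 2 (q13 (x.1, x.2.2)))
        + (∑ x : S × T × U, a x * Real.logb 2 (q23 (x.2.1, x.2.2)))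
        - ∑ x : S × T × U, a x * Real.logb 2 (q3 x.2.2) := by
    rw [← Finset.sum_add_distrib, ← Finset.sum_sub_distrib]
    exact Finset.sum_congr rfl fun x _ => hsplit x
  have hE13 : ∑ x : S × T × U, a x * Real.logb 2 (q13 (x.1, x.2.2))
      = ∑ y : S × U, q13 y * Real.logb 2 (q13 y) := by
    rw [sum_triple (fun x => a x * Real.logb 2 (q13 (x.1, x.2.2)))]
    dsimp only
    have hrow : ∀ u s, (∑ t, a (s, t, u) * Real.logb 2 (q13 (s, u)))
        = q13 (s, u) * Real.logb 2 (q13 (s, u)) := fun u s => by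
      rw [← Finset.sum_mul, ← hm13]
    simp_rw [hrow]
    rw [Fintype.sum_prod_type]
    exact Finset.sum_comm
  have hE23 : ∑ x : S × T × U, a x * Real.logb 2 (q23 (x.2.1, x.2.2))
      = ∑ y : T × U, q23 y * Real.logb 2 (q23 y) := by
    rw [sum_triple (fun x => a x * Real.logb 2 (q23 (x.2.1, x.2.2)))]
    dsimp only
    have hswap : ∀ u : U, (∑ s, ∑ t, a (s, t, u) * Real.logb 2 (q23 (t, u)))
        = ∑ t, ∑ s, a (s, t, u) * Real.logb 2 (q23 (t, u)) := fun u => Finset.sum_comm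
    simp_rw [hswap]
    have hrow : ∀ u t, (∑ s, a (s, t, u) * Real.logb 2 (q23 (t, u)))
        = q23 (t, u) * Real.logb 2 (q23 (t, u)) := fun u t => by
      rw [← Finset.sum_mul, ← hm23]
    simp_rw [hrow]
    rw [Fintype.sum_prod_type]
    exact Finset.sum_comm
  have hE3 : ∑ x : S × T × U, a x * Real.logb 2 (q3 x.2.2)
      = ∑ u : U, q3 u * Real.logb 2 (q3 u) := by
    rw [sum_triple (fun x => a x * Real.logb 2 (q3 x.2.2))]
    dsimp only
    have hrow : ∀ u s, (∑ t, a (s, t, u) * Real.logb 2 (q3 u))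
        = q13 (s, u) * Real.logb 2 (q3 u) := fun u s => by
      rw [← Finset.sum_mul, ← hm13]
    simp_rw [hrow]
    refine Finset.sum_congr rfl fun u _ => ?_
    rw [← Finset.sum_mul, ← hm3]
  rw [hsum_split, hE13, hE23, hE3] at hG
  have e1 : shEnt p (fun ω => (X ω, Y ω, Z ω))
      = -∑ x : S × T × U, a x * Real.logb 2 (a x) := shEnt_eq _
  have e2 : shEnt p (fun ω => (X ω, Z ω)) = -∑ y : S × U, q13 y * Real.logb 2 (q13 y) :=
    shEnt_eq _
  have e3 : shEnt p (fun ω => (Y ω, Z ω)) = -∑ y : T × U, q23 y * Real.logb 2 (q23 y) :=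
    shEnt_eq _
  have e4 : shEnt p Z = -∑ u : U, q3 u * Real.logb 2 (q3 u) := shEnt_eq _
  rw [e1, e2, e3, e4]
  linarith

end OProof4

namespace OProof6
open OProof OProof2 OProof3 OProof4

set_option linter.unusedSectionVars false

variable {n : ℕ} {S : Fin n → Type*} [∀ i, Fintype (S i)] [∀ i, DecidableEq (S i)]
  {p : Ω → ℝ} (X : ∀ i, Ω → S i)

lemma subadd (hp : ∀ ω, 0 ≤ p ω) (hp1 : ∑ ω, p ω = 1) {S' T' : Type*} [Fintype S']
    [DecidableEq S'] [Fintype T'] [DecidableEq T'] (f : Ω → S') (g : Ω → T') :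
    shEnt p (fun ω => (f ω, g ω)) ≤ shEnt p f + shEnt p g := by
  have hs := submod hp hp1 f g (fun _ => ())
  have h1 : shEnt p (fun ω => (f ω, g ω, ())) = shEnt p (fun ω => (f ω, g ω)) :=
    shEnt_comp_inj (fun ω => (f ω, g ω)) (fun y => (y.1, y.2, ()))
      (fun a b h => by
        have h1 := congrArg Prod.fst h
        have h2 := congrArg (fun z => z.2.1) h
        simp only at h1 h2
        exact Prod.ext h1 h2)
  have h2 : shEnt p (fun ω => (f ω, ())) = shEnt p f :=
    shEnt_comp_inj f (fun s => (s, ()))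
      (fun a b h => by simpa using congrArg Prod.fst h)
  have h3 : shEnt p (fun ω => (g ω, ())) = shEnt p g :=
    shEnt_comp_inj g (fun s => (s, ()))
      (fun a b h => by simpa using congrArg Prod.fst h)
  have h4 : shEnt p (fun _ : Ω => ()) = 0 := shEnt_subsingleton hp1 _
  rw [h1, h4] at hs
  rw [h2, h3] at hs
  linarith

lemma subEnt_mono (hp : ∀ ω, 0 ≤ p ω) {γ δ : Finset (Fin n)} (hsub : γ ⊆ δ) :
    subEnt p X γ ≤ subEnt p X δ := by
  have h := shEnt_comp_le hp (restrict X δ)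
    (fun (v : ∀ i : δ, S i.1) (i : γ) => v ⟨i.1, hsub i.2⟩)
  unfold subEnt
  convert h using 2
  rfl

lemma subEnt_union_le (hp : ∀ ω, 0 ≤ p ω) (hp1 : ∑ ω, p ω = 1) (A B : Finset (Fin n)) :
    subEnt p X (A ∪ B) ≤ subEnt p X A + subEnt p X B := by
  have hinj : Function.Injective
      (fun v : (∀ i : (A ∪ B : Finset (Fin n)), S i.1) =>
        ((fun i : A => v ⟨i.1, Finset.mem_union_left B i.2⟩),
         (fun i : B => v ⟨i.1, Finset.mem_union_right A i.2⟩))) := by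
    intro v w h
    funext i
    obtain ⟨i1, hi⟩ := i
    rcases Finset.mem_union.mp hi with hiA | hiB
    · exact congrFun (congrArg Prod.fst h) ⟨i1, hiA⟩
    · exact congrFun (congrArg Prod.snd h) ⟨i1, hiB⟩
  have he := shEnt_comp_inj (p := p) (restrict X (A ∪ B)) _ hinj
  have hle := subadd hp hp1 (restrict X A) (restrict X B)
  have he2 : shEnt p (fun ω => (restrict X A ω, restrict X B ω)) = subEnt p X (A ∪ B) := by
    unfold subEnt
    convert he using 2
    rfl
  rw [← he2]
  exact hle

lemma subEnt_submod (hp : ∀ ω, 0 ≤ p ω) (hp1 : ∑ ω, p ω = 1) (A B : Finset (Fin n)) :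
    subEnt p X (A ∪ B) + subEnt p X (A ∩ B) ≤ subEnt p X A + subEnt p X B := by
  have hs := submod hp hp1 (restrict X A) (restrict X B) (restrict X (A ∩ B))
  have eA' := shEnt_comp_inj (p := p) (restrict X A)
      (fun v => (v, fun i : (A ∩ B : Finset (Fin n)) =>
        v ⟨i.1, Finset.mem_of_mem_inter_left i.2⟩))
      (fun a b h => congrArg Prod.fst h)
  have eA : shEnt p (fun ω => (restrict X A ω, restrict X (A ∩ B) ω)) = subEnt p X A := by
    unfold subEnt; convert eA' using 2; rfl
  have eB' := shEnt_comp_inj (p := p) (restrict X B)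
      (fun v => (v, fun i : (A ∩ B : Finset (Fin n)) =>
        v ⟨i.1, Finset.mem_of_mem_inter_right i.2⟩))
      (fun a b h => congrArg Prod.fst h)
  have eB : shEnt p (fun ω => (restrict X B ω, restrict X (A ∩ B) ω)) = subEnt p X B := by
    unfold subEnt; convert eB' using 2; rfl
  have hinj : Function.Injective
      (fun v : (∀ i : (A ∪ B : Finset (Fin n)), S i.1) =>
        ((fun i : A => v ⟨i.1, Finset.mem_union_left B i.2⟩),
         (fun i : B => v ⟨i.1, Finset.mem_union_right A i.2⟩),
         (fun i : (A ∩ B : Finset (Fin n)) =>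
           v ⟨i.1, Finset.mem_union_left B (Finset.mem_of_mem_inter_left i.2)⟩))) := by
    intro v w h
    funext i
    obtain ⟨i1, hi⟩ := i
    rcases Finset.mem_union.mp hi with hiA | hiB
    · exact congrFun (congrArg Prod.fst h) ⟨i1, hiA⟩
    · exact congrFun (congrArg (fun z => z.2.1) h) ⟨i1, hiB⟩
  have eU' := shEnt_comp_inj (p := p) (restrict X (A ∪ B)) _ hinj
  have eU : shEnt p
      (fun ω => (restrict X A ω, restrict X B ω, restrict X (A ∩ B) ω))
        = subEnt p X (A ∪ B) := by
    unfold subEnt; convert eU' using 2; rfl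
  rw [eA, eB, eU] at hs
  have hz : subEnt p X (A ∩ B) = shEnt p (restrict X (A ∩ B)) := rfl
  linarith [hs]

lemma subEnt_singleton (i : Fin n) : subEnt p X {i} = shEnt p (X i) := by
  have hinj : Function.Injective
      (fun v : (∀ j : ({i} : Finset (Fin n)), S j.1) =>
        v ⟨i, Finset.mem_singleton_self i⟩) := by
    intro v w h
    funext j
    obtain ⟨j1, hj⟩ := j
    have hj1 : j1 = i := Finset.mem_singleton.mp hj
    subst hj1
    exact h
  have h := shEnt_comp_inj (p := p) (restrict X {i}) _ hinj
  unfold subEnt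
  convert h.symm using 2
  rfl

lemma subEnt_empty (hp1 : ∑ ω, p ω = 1) : subEnt p X (∅ : Finset (Fin n)) = 0 := by
  haveI : Subsingleton (∀ i : ((∅ : Finset (Fin n)) : Type _), S i.1) :=
    ⟨fun f g => funext fun i => absurd i.2 (Finset.notMem_empty i.1)⟩
  exact shEnt_subsingleton hp1 _

lemma subEnt_nonneg (hp : ∀ ω, 0 ≤ p ω) (hp1 : ∑ ω, p ω = 1) (γ : Finset (Fin n)) :
    0 ≤ subEnt p X γ := shEnt_nonneg hp hp1 _

lemma subEnt_le_sum (hp : ∀ ω, 0 ≤ p ω) (hp1 : ∑ ω, p ω = 1) (γ : Finset (Fin n)) :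
    subEnt p X γ ≤ ∑ i ∈ γ, shEnt p (X i) := by
  induction γ using Finset.induction_on with
  | empty => rw [subEnt_empty X hp1, Finset.sum_empty]
  | insert a γ' ha IH =>
    rw [Finset.sum_insert ha, Finset.insert_eq]
    calc subEnt p X ({a} ∪ γ') ≤ subEnt p X {a} + subEnt p X γ' :=
          subEnt_union_le X hp hp1 _ _
      _ = shEnt p (X a) + subEnt p X γ' := by rw [subEnt_singleton]
      _ ≤ shEnt p (X a) + ∑ i ∈ γ', shEnt p (X i) := by linarith

end OProof6

namespace OProof7
open OProof OProof2 OProof3 OProof4 OProof6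

set_option linter.unusedSectionVars false

variable {n : ℕ} {S : Fin n → Type*} [∀ i, Fintype (S i)] [∀ i, DecidableEq (S i)]
  {p : Ω → ℝ} (X : ∀ i, Ω → S i)

/-- Han-type inequality. -/
lemma han (hp : ∀ ω, 0 ≤ p ω) (hp1 : ∑ ω, p ω = 1) :
    ∀ (d : ℕ) (δ : Finset (Fin n)) (j : Fin n), j ∈ δ → δ.card = d →
      shEnt p (X j) + ((d : ℝ) - 2) * subEnt p X δ
        ≤ ∑ k ∈ δ.erase j, subEnt p X (δ.erase k) := by
  intro d
  induction d with
  | zero =>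
    intro δ j hj hcard
    rw [Finset.card_eq_zero.mp hcard] at hj
    exact absurd hj (Finset.notMem_empty j)
  | succ d IH =>
    intro δ j hj hcard
    by_cases hd : δ.erase j = ∅
    · have hδ : δ = {j} := by
        have := (Finset.erase_eq_empty_iff δ j).mp hd
        rcases this with h | h
        · rw [h] at hj; exact absurd hj (Finset.notMem_empty j)
        · exact h
      subst hδ
      have hd0 : d = 0 := by
        have := hcard; rw [Finset.card_singleton] at this; omega
      subst hd0
      rw [hd, Finset.sum_empty, subEnt_singleton]
      push_cast
      ring_nf
      rfl
    · obtain ⟨a, ha⟩ := Finset.nonempty_iff_ne_empty.mpr hd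
      have haj : a ≠ j := (Finset.mem_erase.mp ha).1
      have haδ : a ∈ δ := (Finset.mem_erase.mp ha).2
      set δ' := δ.erase a with hδ'
      have hj' : j ∈ δ' := Finset.mem_erase.mpr ⟨haj.symm, hj⟩
      have hc' : δ'.card = d := by
        rw [hδ', Finset.card_erase_of_mem haδ, hcard]
        omega
      have hd1 : 1 ≤ d := by
        have : 0 < δ'.card := Finset.card_pos.mpr ⟨j, hj'⟩
        omega
      have IH' := IH δ' j hj' hc'
      have hsub : ∀ k ∈ δ'.erase j,
          subEnt p X δ - subEnt p X δ' + subEnt p X (δ'.erase k) ≤ subEnt p X (δ.erase k) := by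
        intro k hk
        have hkj : k ≠ j := (Finset.mem_erase.mp hk).1
        have hkδ' : k ∈ δ' := (Finset.mem_erase.mp hk).2
        have hka : k ≠ a := (Finset.mem_erase.mp hkδ').1
        have hkδ : k ∈ δ := (Finset.mem_erase.mp hkδ').2
        have hAB : (δ.erase k) ∪ δ' = δ := by
          ext x
          simp only [Finset.mem_union, Finset.mem_erase, hδ']
          constructor
          · rintro (⟨-, h⟩ | ⟨-, h⟩) <;> exact h
          · intro hx
            by_cases hxk : x = k
            · subst hxk; exact Or.inr ⟨hka, hx⟩
            · exact Or.inl ⟨hxk, hx⟩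
        have hAB2 : (δ.erase k) ∩ δ' = δ'.erase k := by
          ext x
          simp only [Finset.mem_inter, Finset.mem_erase, hδ']
          tauto
        have hsm := subEnt_submod X hp hp1 (δ.erase k) δ'
        rw [hAB, hAB2] at hsm
        linarith
      have hcd : (δ'.erase j).card = d - 1 := by
        rw [Finset.card_erase_of_mem hj', hc']
      have hsum : ((d : ℝ) - 1) * (subEnt p X δ - subEnt p X δ')
            + ∑ k ∈ δ'.erase j, subEnt p X (δ'.erase k)
          ≤ ∑ k ∈ δ'.erase j, subEnt p X (δ.erase k) := by
        have h1 : ∑ k ∈ δ'.erase j,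
            (subEnt p X δ - subEnt p X δ' + subEnt p X (δ'.erase k))
            ≤ ∑ k ∈ δ'.erase j, subEnt p X (δ.erase k) :=
          Finset.sum_le_sum hsub
        rw [Finset.sum_add_distrib, Finset.sum_const, hcd, nsmul_eq_mul,
          Nat.cast_sub hd1, Nat.cast_one] at h1
        exact h1
      have hsplit : ∑ k ∈ δ.erase j, subEnt p X (δ.erase k)
          = subEnt p X δ' + ∑ k ∈ (δ.erase j).erase a, subEnt p X (δ.erase k) :=
        (Finset.add_sum_erase _ _ ha).symm
      have hcomm : (δ.erase j).erase a = δ'.erase j := by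
        rw [hδ', Finset.erase_right_comm]
      rw [hsplit, hcomm]
      push_cast
      linarith

end OProof7

open OProof OProof2 OProof3 OProof4 OProof6 OProof7 in
/-- for any subset `γ ⊆ {1,…,n}` with `|γ| = m` (`m ≤ n-1`), the
O-information satisfies
`C(X^γ) - (n-2)·log|𝒳| ≤ Ω(X^n) ≤ C(X^γ) + (n-m-1)·log|𝒳|`, where `|𝒳|` is
the maximum alphabet cardinality (logarithm base 2). -/
theorem oInfo_bounds_from_subset_totCorr
    (p : Ω → ℝ) (hp : ∀ ω, 0 ≤ p ω) (hp1 : ∑ ω, p ω = 1)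
    (X : ∀ i, Ω → S i) (m : ℕ) (hm1 : 1 ≤ m) (hm2 : m ≤ n - 1)
    (γ : Finset (Fin n)) (hγ : γ.card = m) :
    totCorr p X γ
        - ((n : ℝ) - 2) *
            Real.logb 2 ((Finset.univ.sup fun i => Fintype.card (S i) : ℕ) : ℝ)
      ≤ oInfo p X Finset.univ
    ∧ oInfo p X Finset.univ
      ≤ totCorr p X γ
        + ((n : ℝ) - (m : ℝ) - 1) *
            Real.logb 2 ((Finset.univ.sup fun i => Fintype.card (S i) : ℕ) : ℝ) := by
  classical
  have hn2 : 2 ≤ n := by omega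
  have hmn : m + 1 ≤ n := by omega
  set L : ℝ := Real.logb 2 ((Finset.univ.sup fun i => Fintype.card (S i) : ℕ) : ℝ) with hLdef
  have hΩne : Nonempty Ω := by
    by_contra h
    rw [not_nonempty_iff] at h
    rw [Finset.univ_eq_empty, Finset.sum_empty] at hp1
    norm_num at hp1
  have hSne : ∀ i, Nonempty (S i) := fun i => ⟨X i (Classical.arbitrary Ω)⟩
  have hL0 : 0 ≤ L := by
    rw [hLdef]
    apply Real.logb_nonneg one_lt_two
    have i0 : Fin n := ⟨0, by omega⟩
    haveI := hSne i0
    have h1 : 1 ≤ Fintype.card (S i0) := Fintype.card_pos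
    have h2 : Fintype.card (S i0) ≤ Finset.univ.sup fun i => Fintype.card (S i) :=
      Finset.le_sup (f := fun i => Fintype.card (S i)) (Finset.mem_univ i0)
    exact_mod_cast le_trans h1 h2
  have hHle : ∀ i, shEnt p (X i) ≤ L := by
    intro i
    haveI := hSne i
    have h1 : shEnt p (X i) ≤ Real.logb 2 (Fintype.card (S i)) :=
      shEnt_le_logb_card hp hp1 (X i)
    refine h1.trans ?_
    refine Real.logb_le_logb_of_le one_lt_two (by exact_mod_cast Fintype.card_pos) ?_
    exact_mod_cast Finset.le_sup (f := fun i => Fintype.card (S i)) (Finset.mem_univ i)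
  have hsumH : ∀ δ : Finset (Fin n), ∑ i ∈ δ, shEnt p (X i) ≤ (δ.card : ℝ) * L := by
    intro δ
    calc ∑ i ∈ δ, shEnt p (X i) ≤ ∑ _i ∈ δ, L := Finset.sum_le_sum fun i _ => hHle i
      _ = δ.card * L := by rw [Finset.sum_const, nsmul_eq_mul]
  have hsubcard : ∀ δ : Finset (Fin n), subEnt p X δ ≤ (δ.card : ℝ) * L :=
    fun δ => (subEnt_le_sum X hp hp1 δ).trans (hsumH δ)
  have hγne : γ ≠ Finset.univ := fun h => by
    rw [h, Finset.card_univ, Fintype.card_fin] at hγ; omega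
  obtain ⟨j1, -, hj1γ⟩ :=
    Finset.exists_of_ssubset (Finset.ssubset_univ_iff.mpr hγne)
  obtain ⟨j2, hj2γ⟩ := Finset.card_pos.mp (by omega : 0 < γ.card)
  have hj12 : j1 ≠ j2 := fun h => hj1γ (h ▸ hj2γ)
  have hγsub : γ ⊆ Finset.univ.erase j1 := fun i hi =>
    Finset.mem_erase.mpr ⟨fun h => hj1γ (h ▸ hi), Finset.mem_univ i⟩
  have hcard_univ : (Finset.univ : Finset (Fin n)).card = n := by
    rw [Finset.card_univ, Fintype.card_fin]
  have hO : oInfo p X Finset.univ = (∑ i, shEnt p (X i))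
      + ((n:ℝ) - 2) * subEnt p X Finset.univ
      - ∑ k : Fin n, subEnt p X (Finset.univ.erase k) := by
    unfold oInfo totCorr bindEnt
    rw [Finset.sum_sub_distrib, Finset.sum_const, hcard_univ, nsmul_eq_mul]
    ring
  -- counting
  have hcastnm1 : (((Finset.univ.erase j1) \ γ).card : ℝ) = (n:ℝ) - m - 1 := by
    rw [Finset.card_sdiff_of_subset hγsub, Finset.card_erase_of_mem (Finset.mem_univ j1), hcard_univ, hγ,
      Nat.sub_sub, Nat.cast_sub (by omega : 1 + m ≤ n), Nat.cast_add, Nat.cast_one]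
    ring
  -- Han / upper bound
  have hhan := han X hp hp1 n Finset.univ j1 (Finset.mem_univ j1) hcard_univ
  have hsplit1 : ∑ k : Fin n, subEnt p X (Finset.univ.erase k)
      = subEnt p X (Finset.univ.erase j1)
        + ∑ k ∈ Finset.univ.erase j1, subEnt p X (Finset.univ.erase k) :=
    (Finset.add_sum_erase _ _ (Finset.mem_univ j1)).symm
  have hsplitH : ∑ i : Fin n, shEnt p (X i)
      = shEnt p (X j1) + ∑ i ∈ Finset.univ.erase j1, shEnt p (X i) :=
    (Finset.add_sum_erase _ _ (Finset.mem_univ j1)).symm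
  have hupper1 : oInfo p X Finset.univ ≤ totCorr p X (Finset.univ.erase j1) := by
    unfold totCorr
    rw [hO, hsplit1, hsplitH]
    linarith [hhan]
  have hupper2 : totCorr p X (Finset.univ.erase j1) ≤ totCorr p X γ + ((n:ℝ) - m - 1) * L := by
    unfold totCorr
    have hmono := subEnt_mono X hp hγsub
    have hsdiff : ∑ i ∈ (Finset.univ.erase j1) \ γ, shEnt p (X i) + ∑ i ∈ γ, shEnt p (X i)
        = ∑ i ∈ Finset.univ.erase j1, shEnt p (X i) := Finset.sum_sdiff hγsub
    have hbd := hsumH ((Finset.univ.erase j1) \ γ)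
    rw [hcastnm1] at hbd
    linarith
  -- lower bound pieces
  have hj2mem : j2 ∈ Finset.univ.erase j1 :=
    Finset.mem_erase.mpr ⟨fun h => hj12 h.symm, Finset.mem_univ j2⟩
  have hsplit3 : ∑ k ∈ Finset.univ.erase j1, subEnt p X (Finset.univ.erase k)
      = subEnt p X (Finset.univ.erase j2)
        + ∑ k ∈ (Finset.univ.erase j1).erase j2, subEnt p X (Finset.univ.erase k) :=
    (Finset.add_sum_erase _ _ hj2mem).symm
  have hcard2 : ((((Finset.univ.erase j1).erase j2).card : ℕ) : ℝ) = (n:ℝ) - 2 := by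
    rw [Finset.card_erase_of_mem hj2mem, Finset.card_erase_of_mem (Finset.mem_univ j1),
      hcard_univ, Nat.sub_sub, Nat.cast_sub (by omega : 1 + 1 ≤ n)]
    norm_num
  have hrest : ∑ k ∈ (Finset.univ.erase j1).erase j2, subEnt p X (Finset.univ.erase k)
      ≤ ((n:ℝ) - 2) * subEnt p X Finset.univ := by
    calc ∑ k ∈ (Finset.univ.erase j1).erase j2, subEnt p X (Finset.univ.erase k)
        ≤ ∑ _k ∈ (Finset.univ.erase j1).erase j2, subEnt p X Finset.univ :=
          Finset.sum_le_sum fun k _ => subEnt_mono X hp (Finset.erase_subset _ _)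
      _ = (((Finset.univ.erase j1).erase j2).card : ℝ) * subEnt p X Finset.univ := by
          rw [Finset.sum_const, nsmul_eq_mul]
      _ = ((n:ℝ) - 2) * subEnt p X Finset.univ := by rw [hcard2]
  have hEq1 : (Finset.univ.erase j1) \ γ = (Finset.univ \ γ).erase j1 := by
    ext x
    simp only [Finset.mem_sdiff, Finset.mem_erase, Finset.mem_univ, true_and]
    tauto
  have hD2 : (Finset.univ.erase j2) \ (γ.erase j2) = Finset.univ \ γ := by
    ext x
    simp only [Finset.mem_sdiff, Finset.mem_erase, Finset.mem_univ, true_and, and_true]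
    by_cases h2 : x = j2
    · subst h2; simp [hj2γ]
    · simp [h2]
  have hb1 : subEnt p X (Finset.univ.erase j1)
      ≤ subEnt p X γ + ∑ i ∈ (Finset.univ \ γ).erase j1, shEnt p (X i) := by
    have hu : γ ∪ ((Finset.univ.erase j1) \ γ) = Finset.univ.erase j1 :=
      Finset.union_sdiff_of_subset hγsub
    calc subEnt p X (Finset.univ.erase j1)
        = subEnt p X (γ ∪ ((Finset.univ.erase j1) \ γ)) := by rw [hu]
      _ ≤ subEnt p X γ + subEnt p X ((Finset.univ.erase j1) \ γ) :=
          subEnt_union_le X hp hp1 _ _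
      _ ≤ subEnt p X γ + ∑ i ∈ (Finset.univ.erase j1) \ γ, shEnt p (X i) := by
          linarith [subEnt_le_sum X hp hp1 ((Finset.univ.erase j1) \ γ)]
      _ = subEnt p X γ + ∑ i ∈ (Finset.univ \ γ).erase j1, shEnt p (X i) := by rw [hEq1]
  have hγ2sub : γ.erase j2 ⊆ Finset.univ.erase j2 :=
    Finset.erase_subset_erase j2 (Finset.subset_univ γ)
  have hb2 : subEnt p X (Finset.univ.erase j2)
      ≤ subEnt p X (γ.erase j2) + ∑ i ∈ Finset.univ \ γ, shEnt p (X i) := by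
    have hu : (γ.erase j2) ∪ ((Finset.univ.erase j2) \ (γ.erase j2)) = Finset.univ.erase j2 :=
      Finset.union_sdiff_of_subset hγ2sub
    calc subEnt p X (Finset.univ.erase j2)
        = subEnt p X ((γ.erase j2) ∪ ((Finset.univ.erase j2) \ (γ.erase j2))) := by rw [hu]
      _ ≤ subEnt p X (γ.erase j2) + subEnt p X ((Finset.univ.erase j2) \ (γ.erase j2)) :=
          subEnt_union_le X hp hp1 _ _
      _ ≤ subEnt p X (γ.erase j2)
            + ∑ i ∈ (Finset.univ.erase j2) \ (γ.erase j2), shEnt p (X i) := by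
          linarith [subEnt_le_sum X hp hp1 ((Finset.univ.erase j2) \ (γ.erase j2))]
      _ = subEnt p X (γ.erase j2) + ∑ i ∈ Finset.univ \ γ, shEnt p (X i) := by rw [hD2]
  have hb3 : subEnt p X (γ.erase j2) ≤ ((m:ℝ) - 1) * L := by
    have := hsubcard (γ.erase j2)
    rw [Finset.card_erase_of_mem hj2γ, hγ, Nat.cast_sub hm1, Nat.cast_one] at this
    exact this
  have hf2 : shEnt p (X j1) + ∑ i ∈ (Finset.univ \ γ).erase j1, shEnt p (X i)
      = ∑ i ∈ Finset.univ \ γ, shEnt p (X i) :=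
    Finset.add_sum_erase _ (fun i => shEnt p (X i))
      (Finset.mem_sdiff.mpr ⟨Finset.mem_univ j1, hj1γ⟩)
  have hf1 : ∑ i ∈ Finset.univ \ γ, shEnt p (X i) + ∑ i ∈ γ, shEnt p (X i)
      = ∑ i : Fin n, shEnt p (X i) := Finset.sum_sdiff (Finset.subset_univ γ)
  have hf7 : 0 ≤ shEnt p (X j1) := shEnt_nonneg hp hp1 _
  have hf8 : ((m:ℝ) - 1) * L ≤ ((n:ℝ) - 2) * L := by
    refine mul_le_mul_of_nonneg_right ?_ hL0
    have : (m:ℝ) ≤ (n:ℝ) - 1 := by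
      have : (m:ℝ) + 1 ≤ (n:ℝ) := by exact_mod_cast hmn
      linarith
    linarith
  have hcardA2 : ((((Finset.univ \ γ).erase j1).card : ℕ) : ℝ) = (n:ℝ) - m - 1 := by
    rw [Finset.card_erase_of_mem (Finset.mem_sdiff.mpr ⟨Finset.mem_univ j1, hj1γ⟩),
      Finset.card_sdiff_of_subset (Finset.subset_univ γ), hcard_univ, hγ,
      Nat.cast_sub (by omega : 1 ≤ n - m), Nat.cast_sub (by omega : m ≤ n), Nat.cast_one]
  have hb4 := hsumH ((Finset.univ \ γ).erase j1)
  rw [hcardA2] at hb4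
  constructor
  · -- lower bound
    unfold totCorr
    rw [hO, hsplit1, hsplit3]
    linarith
  · -- upper bound
    exact hupper1.trans hupper2
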